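/- For a maximal nested set F on a Dynkin-type diagram D, the map p_F sending each simple root (vertex) α to the minimal element B ∈ F containing the support of α is a bijection between the vertices of D and the elements of F. In the abstracted form: if F is a family of pairwise compatible connected vertex-subsets of a connected graph D on n vertices, containing D itself, that is maximal among such families, then |F| = n. -/

import Mathlib

/-- Orthogonality for vertex subsets of a simple graph. -/
def Orthog {V : Type*} (G : SimpleGraph V) (s t : Finset V) : Prop :=
  Disjoint s t ∧ ∀ x ∈ s, ∀ y ∈ t, ¬ G.Adj x y

/-- Compatibility for vertex subsets. -/
def Compat {V : Type*} (G : SimpleGraph V) (s t : Finset V) : Prop :=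
  s ⊆ t ∨ t ⊆ s ∨ Orthog G s t

/-- A nested set on a connected diagram `D`: a family of connected subsets,
pairwise compatible, containing the whole vertex set. -/
def IsNestedSet {V : Type*} [Fintype V] (G : SimpleGraph V)
    (F : Finset (Finset V)) : Prop :=
  Finset.univ ∈ F ∧
  (∀ s ∈ F, (G.induce (s : Set V)).Connected) ∧
  (∀ s ∈ F, ∀ t ∈ F, Compat G s t)

section Helpers

variable {V : Type*} {G : SimpleGraph V}

lemma Orthog.symm' {s t : Finset V} (h : Orthog G s t) : Orthog G t s :=
  ⟨h.1.symm, fun x hx y hy hadj => h.2 y hy x hx hadj.symm⟩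

lemma Compat.symm' {s t : Finset V} (h : Compat G s t) : Compat G t s := by
  rcases h with h | h | h
  · exact Or.inr (Or.inl h)
  · exact Or.inl h
  · exact Or.inr (Or.inr h.symm')

lemma walk_reach {s : Set V} :
    ∀ {a b : V} (w : G.Walk a b), (∀ z ∈ w.support, z ∈ s) →
      ∀ (ha : a ∈ s) (hb : b ∈ s), (G.induce s).Reachable ⟨a, ha⟩ ⟨b, hb⟩ := by
  intro a b w
  induction w with
  | nil => intro _ ha hb; exact SimpleGraph.Reachable.refl _
  | @cons a c b h p ih =>
    intro hw ha hb
    have hc : c ∈ s := hw c (by simp [SimpleGraph.Walk.support_cons])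
    have hadj : (G.induce s).Adj ⟨a, ha⟩ ⟨c, hc⟩ := h
    exact hadj.reachable.trans
      (ih (fun z hz => hw z (by simp [SimpleGraph.Walk.support_cons, hz])) hc hb)

lemma conn_walk {s : Finset V} [Fintype V] (h : (G.induce (s : Set V)).Connected)
    {x y : V} (hx : x ∈ s) (hy : y ∈ s) :
    ∃ w : G.Walk x y, ∀ z ∈ w.support, z ∈ s := by
  obtain ⟨p⟩ := h.preconnected ⟨x, hx⟩ ⟨y, hy⟩
  refine ⟨p.map (SimpleGraph.Embedding.induce (s : Set V)).toHom, ?_⟩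
  intro z hz
  have hz : z ∈ (p.map (SimpleGraph.Embedding.induce (s : Set V)).toHom).support := hz
  rw [SimpleGraph.Walk.support_map, List.mem_map] at hz
  obtain ⟨u, _, rfl⟩ := hz
  exact u.2

lemma conn_of_walks {s : Finset V} [Fintype V] (hne : s.Nonempty)
    (h : ∀ x ∈ s, ∀ y ∈ s, ∃ w : G.Walk x y, ∀ z ∈ w.support, z ∈ s) :
    (G.induce (s : Set V)).Connected := by
  obtain ⟨x0, hx0⟩ := hne
  haveI : Nonempty (s : Set V) := ⟨⟨x0, hx0⟩⟩
  refine ⟨fun a b => ?_⟩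
  obtain ⟨x, hx⟩ := a
  obtain ⟨y, hy⟩ := b
  obtain ⟨w, hw⟩ := h x hx y hy
  exact walk_reach w hw hx hy

lemma exists_crossing :
    ∀ {a b : V} (w : G.Walk a b) {C : Finset V}, a ∈ C → b ∉ C →
      ∃ u v, G.Adj u v ∧ u ∈ C ∧ v ∉ C ∧ v ∈ w.support := by
  intro a b w
  induction w with
  | nil => intro C ha hb; exact absurd ha hb
  | @cons a c b h p ih =>
    intro C ha hb
    by_cases hc : c ∈ C
    · obtain ⟨u, v, h1, h2, h3, h4⟩ := ih hc hb
      exact ⟨u, v, h1, h2, h3, by simp [SimpleGraph.Walk.support_cons, h4]⟩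
    · exact ⟨a, c, h, ha, hc, by simp [SimpleGraph.Walk.support_cons,
        SimpleGraph.Walk.start_mem_support]⟩

end Helpers

theorem stmt_13 {V : Type*} [Fintype V] (G : SimpleGraph V) (hG : G.Connected)
    (F : Finset (Finset V)) (hF : IsNestedSet G F)
    (hmax : ∀ F' : Finset (Finset V), IsNestedSet G F' → F ⊆ F' → F' = F) :
    F.card = Fintype.card V := by
  classical
  obtain ⟨huniv, hconn, hcompat⟩ := hF
  -- two sets of F sharing a point are nested
  have hnest : ∀ C ∈ F, ∀ D ∈ F, ∀ x, x ∈ C → x ∈ D → C ⊆ D ∨ D ⊆ C := by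
    intro C hC D hD x hxC hxD
    rcases hcompat C hC D hD with h | h | h
    · exact Or.inl h
    · exact Or.inr h
    · exact absurd hxD (Finset.disjoint_left.mp h.1 hxC)
  -- minimal element containing x
  have hm : ∀ x : V, ∃ B ∈ F, x ∈ B ∧ ∀ C ∈ F, x ∈ C → B ⊆ C := by
    intro x
    have hne : (F.filter (fun C => x ∈ C)).Nonempty :=
      ⟨Finset.univ, Finset.mem_filter.mpr ⟨huniv, Finset.mem_univ x⟩⟩
    obtain ⟨B, hB, hBmin⟩ : ∃ B ∈ F.filter (fun C => x ∈ C),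
        ∀ C ∈ F.filter (fun C => x ∈ C), ¬ C < B := by
      obtain ⟨B, hB⟩ := Finset.exists_minimal hne
      exact ⟨B, hB.prop, fun C hC => hB.not_lt hC⟩
    rw [Finset.mem_filter] at hB
    refine ⟨B, hB.1, hB.2, fun C hC hxC => ?_⟩
    rcases hnest B hB.1 C hC x hB.2 hxC with h | h
    · exact h
    · rcases eq_or_ne C B with rfl | hne'
      · exact h
      · exact absurd (lt_of_le_of_ne h hne') (hBmin C (Finset.mem_filter.mpr ⟨hC, hxC⟩))
  choose m hmF hmx hmmin using hm
  -- surjectivity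
  have hsurj : ∀ B ∈ F, ∃ x, m x = B := by
    intro B hB
    -- first: some x ∈ B lies in no proper subset of B from F
    have hrep : ∃ x ∈ B, ∀ C ∈ F, C ⊂ B → x ∉ C := by
      by_contra hcon
      push_neg at hcon
      have hBne : B.Nonempty := by
        obtain ⟨⟨x, hx⟩⟩ := (hconn B hB).nonempty
        exact ⟨x, hx⟩
      obtain ⟨x0, hx0⟩ := hBne
      obtain ⟨C0, hC0F, hC0B, hx0C0⟩ := hcon x0 hx0
      have hTne : (F.filter (fun C => C ⊂ B ∧ x0 ∈ C)).Nonempty :=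
        ⟨C0, Finset.mem_filter.mpr ⟨hC0F, hC0B, hx0C0⟩⟩
      obtain ⟨C, hCmem, hCmax⟩ : ∃ C ∈ F.filter (fun C => C ⊂ B ∧ x0 ∈ C),
          ∀ C' ∈ F.filter (fun C => C ⊂ B ∧ x0 ∈ C), ¬ C < C' := by
        obtain ⟨C, hC⟩ := Finset.exists_maximal hTne
        exact ⟨C, hC.prop, fun C' hC' hlt => absurd hlt (not_lt_of_ge (hC.2 hC' hlt.le : C' ≤ C))⟩
      rw [Finset.mem_filter] at hCmem
      obtain ⟨hCF, hCB, hx0C⟩ := hCmem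
      obtain ⟨z, hzB, hzC⟩ := Finset.exists_of_ssubset hCB
      obtain ⟨w, hw⟩ := conn_walk (hconn B hB) hx0 hzB
      obtain ⟨u, v, hadj, huC, hvC, hvsupp⟩ := exists_crossing w hx0C hzC
      have hvB : v ∈ B := hw v hvsupp
      obtain ⟨C', hC'F, hC'B, hvC'⟩ := hcon v hvB
      rcases hcompat C hCF C' hC'F with h | h | h
      · have hlt : C < C' := lt_of_le_of_ne h (by rintro rfl; exact hvC hvC')
        exact hCmax C' (Finset.mem_filter.mpr ⟨hC'F, hC'B, h hx0C⟩) hlt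
      · exact hvC (h hvC')
      · exact h.2 u huC v hvC' hadj
    obtain ⟨x, hxB, hx⟩ := hrep
    refine ⟨x, ?_⟩
    rcases eq_or_ne (m x) B with h | h
    · exact h
    · exact absurd (hmx x) (hx (m x) (hmF x) (lt_of_le_of_ne (hmmin x B hB hxB) h))
  -- injectivity
  have hinj : Function.Injective m := by
    intro x y hxy
    by_contra hne
    have hyB : y ∈ m x := by rw [hxy]; exact hmx y
    have hxB : x ∈ m x := hmx x
    -- the connected component of y in B \ {x}
    set A : Finset V := Finset.univ.filter
      (fun z => ∃ w : G.Walk y z, ∀ v ∈ w.support, v ∈ (m x).erase x) with hAdef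
    have hmemA : ∀ z, z ∈ A ↔ ∃ w : G.Walk y z, ∀ v ∈ w.support, v ∈ (m x).erase x := by
      intro z; simp [hAdef]
    have hyA : y ∈ A := (hmemA y).mpr ⟨SimpleGraph.Walk.nil, fun v hv => by
      rw [SimpleGraph.Walk.support_nil, List.mem_singleton] at hv
      subst hv
      exact Finset.mem_erase.mpr ⟨fun h => hne h.symm, hyB⟩⟩
    have hAsub : A ⊆ (m x).erase x := by
      intro z hz
      obtain ⟨w, hw⟩ := (hmemA z).mp hz
      exact hw z w.end_mem_support
    have hAB : A ⊆ m x := hAsub.trans (Finset.erase_subset x (m x))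
    -- closure of A under walks in B.erase x
    have hclos : ∀ z ∈ A, ∀ c, ∀ w : G.Walk z c,
        (∀ v ∈ w.support, v ∈ (m x).erase x) → c ∈ A := by
      intro z hz c w hw
      obtain ⟨w0, hw0⟩ := (hmemA z).mp hz
      refine (hmemA c).mpr ⟨w0.append w, ?_⟩
      intro v hv
      rcases (SimpleGraph.Walk.mem_support_append_iff _ _).mp hv with h | h
      · exact hw0 v h
      · exact hw v h
    have hAconn : (G.induce (A : Set V)).Connected := by
      refine conn_of_walks ⟨y, hyA⟩ ?_
      intro z hz c hc
      obtain ⟨wz, hwz⟩ := (hmemA z).mp hz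
      obtain ⟨wc, hwc⟩ := (hmemA c).mp hc
      refine ⟨wz.reverse.append wc, ?_⟩
      intro v hv
      have hvA : v ∈ (m x).erase x ∧
          (∃ w : G.Walk y v, ∀ u ∈ w.support, u ∈ (m x).erase x) := by
        rcases (SimpleGraph.Walk.mem_support_append_iff _ _).mp hv with h | h
        · rw [SimpleGraph.Walk.support_reverse, List.mem_reverse] at h
          exact ⟨hwz v h, wz.takeUntil v h, fun u hu =>
            hwz u (SimpleGraph.Walk.support_takeUntil_subset _ h hu)⟩
        · exact ⟨hwc v h, wc.takeUntil v h, fun u hu =>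
            hwc u (SimpleGraph.Walk.support_takeUntil_subset _ h hu)⟩
      exact (hmemA v).mpr hvA.2
    have hAnotF : A ∉ F := by
      intro hAF
      have : m x ⊆ A := by rw [hxy]; exact hmmin y A hAF hyA
      exact (Finset.mem_erase.mp (hAsub (this hxB))).1 rfl
    -- compatibility of A with each member of F
    have hkey : ∀ C ∈ F, Compat G A C := by
      intro C hC
      rcases hcompat (m x) (hmF x) C hC with hBC | hCB | horth
      · exact Or.inl (hAB.trans hBC)
      · rcases eq_or_ne C (m x) with rfl | hCBne
        · exact Or.inl hAB
        · have hxC : x ∉ C := fun hxC =>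
            hCBne (Finset.Subset.antisymm hCB (hmmin x C hC hxC))
          have hCsub : C ⊆ (m x).erase x := fun c hc =>
            Finset.mem_erase.mpr ⟨fun h => hxC (h ▸ hc), hCB hc⟩
          by_cases hmeet : (C ∩ A).Nonempty
          · obtain ⟨z, hz⟩ := hmeet
            rw [Finset.mem_inter] at hz
            refine Or.inr (Or.inl (fun c hc => ?_))
            obtain ⟨w, hw⟩ := conn_walk (hconn C hC) hz.1 hc
            exact hclos z hz.2 c w (fun v hv => hCsub (hw v hv))
          · have hdisj : Disjoint A C := by
              rw [Finset.disjoint_right]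
              intro a haC haA
              exact hmeet ⟨a, Finset.mem_inter.mpr ⟨haC, haA⟩⟩
            refine Or.inr (Or.inr ⟨hdisj, fun a haA c hcC hadj => ?_⟩)
            have hcA : c ∈ A := by
              obtain ⟨w, hw⟩ := (hmemA a).mp haA
              refine (hmemA c).mpr ⟨w.concat hadj, ?_⟩
              intro v hv
              rw [SimpleGraph.Walk.support_concat,
                List.mem_append] at hv
              rcases hv with h | h
              · exact hw v h
              · rw [List.mem_singleton] at h
                exact h ▸ hCsub hcC
            exact Finset.disjoint_left.mp hdisj hcA hcC
      · exact Or.inr (Or.inr ⟨Finset.disjoint_of_subset_left hAB horth.1,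
          fun a haA c hcC => horth.2 a (hAB haA) c hcC⟩)
    -- insert A F is a nested set
    have hF' : IsNestedSet G (insert A F) := by
      refine ⟨Finset.mem_insert_of_mem huniv, ?_, ?_⟩
      · intro s hs
        rcases Finset.mem_insert.mp hs with rfl | hs
        · exact hAconn
        · exact hconn s hs
      · intro s hs t ht
        rcases Finset.mem_insert.mp hs with rfl | hs <;>
          rcases Finset.mem_insert.mp ht with rfl | ht
        · exact Or.inl (Finset.Subset.refl _)
        · exact hkey t ht
        · exact (hkey s hs).symm'
        · exact hcompat s hs t ht
    have := hmax (insert A F) hF' (Finset.subset_insert _ _)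
    exact hAnotF (this ▸ Finset.mem_insert_self A F)
  have himg : Finset.univ.image m = F := by
    ext B
    simp only [Finset.mem_image, Finset.mem_univ, true_and]
    constructor
    · rintro ⟨x, rfl⟩; exact hmF x
    · intro hB; exact hsurj B hB
  rw [← himg, Finset.card_image_of_injective _ hinj, Finset.card_univ]
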